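/- For every positive real λ and every nonnegative integer m, ∫₀¹ z^(4m+2) sin(λ z²) dz = ((-1)^m Γ(2m+3/2) / (2 λ^(2m+1))) · ( √(2/λ) · C(√(2λ/π)) − λ sin(λ) Σ_{j=0}^{m-1} (−1)^j λ^(2j)/Γ(2j+5/2) − cos(λ) Σ_{j=0}^{m} (−1)^j λ^(2j)/Γ(2j+3/2) ). -/

import Mathlib

open Real Finset

noncomputable def fresnelC (x : ℝ) : ℝ := ∫ t in (0:ℝ)..x, Real.cos (π * t ^ 2 / 2)

section aux
open MeasureTheory

lemma parts_sin (lam : ℝ) (hl : lam ≠ 0) (n : ℕ) :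
    ∫ z in (0:ℝ)..1, z ^ (n + 2) * Real.sin (lam * z ^ 2)
      = -Real.cos lam / (2 * lam)
        + ((n + 1 : ℝ) / (2 * lam)) * ∫ z in (0:ℝ)..1, z ^ n * Real.cos (lam * z ^ 2) := by
  have hu : ∀ x ∈ Set.uIcc (0:ℝ) 1, HasDerivAt (fun z : ℝ => z ^ (n + 1)) ((n + 1 : ℝ) * x ^ n) x := by
    intro x _; simpa using hasDerivAt_pow (n + 1) x
  have hv : ∀ x ∈ Set.uIcc (0:ℝ) 1,
      HasDerivAt (fun z : ℝ => -Real.cos (lam * z ^ 2) / (2 * lam)) (x * Real.sin (lam * x ^ 2)) x := by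
    intro x _
    have h1 : HasDerivAt (fun z : ℝ => lam * z ^ 2) (lam * (2 * x)) x := by
      simpa using (hasDerivAt_pow 2 x).const_mul lam
    have h3 := ((Real.hasDerivAt_cos (lam * x ^ 2)).comp x h1).neg.div_const (2 * lam)
    refine h3.congr_deriv ?_
    rw [div_eq_iff (mul_ne_zero two_ne_zero hl)]
    ring
  have hiu : IntervalIntegrable (fun x : ℝ => (n + 1 : ℝ) * x ^ n) volume 0 1 :=
    (by continuity : Continuous fun x : ℝ => (n + 1 : ℝ) * x ^ n).intervalIntegrable _ _
  have hiv : IntervalIntegrable (fun x : ℝ => x * Real.sin (lam * x ^ 2)) volume 0 1 :=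
    (by continuity : Continuous fun x : ℝ => x * Real.sin (lam * x ^ 2)).intervalIntegrable _ _
  have H := intervalIntegral.integral_mul_deriv_eq_deriv_mul hu hv hiu hiv
  rw [show (fun z : ℝ => z ^ (n + 2) * Real.sin (lam * z ^ 2))
      = fun z : ℝ => z ^ (n + 1) * (z * Real.sin (lam * z ^ 2)) from funext fun z => by ring]
  rw [H]
  rw [show (fun x : ℝ => (n + 1 : ℝ) * x ^ n * (-Real.cos (lam * x ^ 2) / (2 * lam)))
      = fun x : ℝ => (-(n + 1 : ℝ) / (2 * lam)) * (x ^ n * Real.cos (lam * x ^ 2)) from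
      funext fun x => by ring]
  rw [intervalIntegral.integral_const_mul]
  norm_num
  ring

lemma parts_cos (lam : ℝ) (hl : lam ≠ 0) (n : ℕ) :
    ∫ z in (0:ℝ)..1, z ^ (n + 2) * Real.cos (lam * z ^ 2)
      = Real.sin lam / (2 * lam)
        - ((n + 1 : ℝ) / (2 * lam)) * ∫ z in (0:ℝ)..1, z ^ n * Real.sin (lam * z ^ 2) := by
  have hu : ∀ x ∈ Set.uIcc (0:ℝ) 1, HasDerivAt (fun z : ℝ => z ^ (n + 1)) ((n + 1 : ℝ) * x ^ n) x := by
    intro x _; simpa using hasDerivAt_pow (n + 1) x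
  have hv : ∀ x ∈ Set.uIcc (0:ℝ) 1,
      HasDerivAt (fun z : ℝ => Real.sin (lam * z ^ 2) / (2 * lam)) (x * Real.cos (lam * x ^ 2)) x := by
    intro x _
    have h1 : HasDerivAt (fun z : ℝ => lam * z ^ 2) (lam * (2 * x)) x := by
      simpa using (hasDerivAt_pow 2 x).const_mul lam
    have h3 := ((Real.hasDerivAt_sin (lam * x ^ 2)).comp x h1).div_const (2 * lam)
    refine h3.congr_deriv ?_
    rw [div_eq_iff (mul_ne_zero two_ne_zero hl)]
    ring
  have hiu : IntervalIntegrable (fun x : ℝ => (n + 1 : ℝ) * x ^ n) volume 0 1 :=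
    (by continuity : Continuous fun x : ℝ => (n + 1 : ℝ) * x ^ n).intervalIntegrable _ _
  have hiv : IntervalIntegrable (fun x : ℝ => x * Real.cos (lam * x ^ 2)) volume 0 1 :=
    (by continuity : Continuous fun x : ℝ => x * Real.cos (lam * x ^ 2)).intervalIntegrable _ _
  have H := intervalIntegral.integral_mul_deriv_eq_deriv_mul hu hv hiu hiv
  rw [show (fun z : ℝ => z ^ (n + 2) * Real.cos (lam * z ^ 2))
      = fun z : ℝ => z ^ (n + 1) * (z * Real.cos (lam * z ^ 2)) from funext fun z => by ring]
  rw [H]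
  rw [show (fun x : ℝ => (n + 1 : ℝ) * x ^ n * (Real.sin (lam * x ^ 2) / (2 * lam)))
      = fun x : ℝ => ((n + 1 : ℝ) / (2 * lam)) * (x ^ n * Real.sin (lam * x ^ 2)) from
      funext fun x => by ring]
  rw [intervalIntegral.integral_const_mul]
  norm_num

lemma cos_sq_int (lam : ℝ) (hlam : 0 < lam) :
    ∫ z in (0:ℝ)..1, Real.cos (lam * z ^ 2)
      = Real.sqrt (π / (2 * lam)) * fresnelC (Real.sqrt (2 * lam / π)) := by
  set c := Real.sqrt (2 * lam / π) with hcdef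
  have hcpos : 0 < c := Real.sqrt_pos.mpr (by positivity)
  have hc2 : c ^ 2 = 2 * lam / π := Real.sq_sqrt (by positivity)
  have h := intervalIntegral.integral_comp_mul_right
    (a := (0:ℝ)) (b := 1) (fun t => Real.cos (π * t ^ 2 / 2)) hcpos.ne'
  have heq : ∀ x : ℝ, Real.cos (π * (x * c) ^ 2 / 2) = Real.cos (lam * x ^ 2) := by
    intro x
    congr 1
    rw [mul_pow, hc2]
    field_simp
  simp only [heq, zero_mul, one_mul] at h
  rw [h, smul_eq_mul]
  have : c⁻¹ = Real.sqrt (π / (2 * lam)) := by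
    rw [hcdef, ← Real.sqrt_inv, inv_div]
  rw [this, fresnelC]

end aux

set_option maxHeartbeats 1000000 in
theorem stmt_14 (lam : ℝ) (hlam : 0 < lam) (m : ℕ) :
    ∫ z in (0:ℝ)..1, z ^ (4 * m + 2) * Real.sin (lam * z ^ 2) =
      ((-1 : ℝ) ^ m * Real.Gamma (2 * m + 3 / 2) / (2 * lam ^ (2 * m + 1))) *
        (Real.sqrt (2 / lam) * fresnelC (Real.sqrt (2 * lam / π))
          - lam * Real.sin lam *
              ∑ j ∈ Finset.range m, (-1 : ℝ) ^ j * lam ^ (2 * j) / Real.Gamma (2 * j + 5 / 2)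
          - Real.cos lam *
              ∑ j ∈ Finset.range (m + 1), (-1 : ℝ) ^ j * lam ^ (2 * j) / Real.Gamma (2 * j + 3 / 2)) := by
  have hl : lam ≠ 0 := hlam.ne'
  have hsp : (0:ℝ) < Real.sqrt π := Real.sqrt_pos.mpr pi_pos
  induction m with
  | zero =>
    have h0 := parts_sin lam hl 0
    simp only [pow_zero, one_mul] at h0
    rw [cos_sq_int lam hlam] at h0
    have hg : Real.Gamma (3/2 : ℝ) = Real.sqrt π / 2 := by
      rw [show (3/2 : ℝ) = 1/2 + 1 by norm_num, Real.Gamma_add_one (by norm_num),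
        Real.Gamma_one_half_eq]
      ring
    have hs : Real.sqrt (π / (2 * lam)) = Real.sqrt π / 2 * Real.sqrt (2 / lam) := by
      rw [show π / (2 * lam) = (π / 4) * (2 / lam) by field_simp; ring,
        Real.sqrt_mul (by positivity)]
      congr 1
      rw [show (π/4 : ℝ) = π / 2^2 by norm_num, Real.sqrt_div pi_pos.le,
        Real.sqrt_sq (by norm_num : (0:ℝ) ≤ 2)]
    simp only [Nat.cast_zero, mul_zero, zero_add, pow_zero, one_mul, Finset.range_zero,
      Finset.sum_empty, Finset.range_one, Finset.sum_range_one, Nat.cast_ofNat, mul_one,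
      zero_mul, sub_zero]
    norm_num [h0, hg, hs]
    field_simp
    ring
  | succ m ih =>
    have hpc := parts_cos lam hl (4*m+2)
    rw [ih] at hpc
    have hps := parts_sin lam hl (4*m+4)
    rw [show 4*m+2+2 = 4*m+4 from by ring] at hpc
    rw [hpc] at hps
    rw [show 4*(m+1)+2 = 4*m+4+2 from by ring, hps]
    have hG0 : (0:ℝ) < Real.Gamma (2*m+3/2) := Real.Gamma_pos_of_pos (by positivity)
    have h52 : Real.Gamma (2*(m:ℝ)+5/2) = (2*(m:ℝ)+3/2) * Real.Gamma (2*(m:ℝ)+3/2) := by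
      rw [show (2*(m:ℝ)+5/2) = (2*(m:ℝ)+3/2)+1 by ring, Real.Gamma_add_one (by positivity)]
    have h72 : Real.Gamma (2*((m:ℝ)+1)+3/2)
        = (2*(m:ℝ)+5/2) * ((2*(m:ℝ)+3/2) * Real.Gamma (2*(m:ℝ)+3/2)) := by
      rw [show (2*((m:ℝ)+1)+3/2) = (2*(m:ℝ)+5/2)+1 by ring,
        Real.Gamma_add_one (by positivity), h52]
    rw [Finset.sum_range_succ, Finset.sum_range_succ, Finset.sum_range_succ,
      Finset.sum_range_succ]
    push_cast
    rw [h52, h72]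
    set F := fresnelC (Real.sqrt (2 * lam / π)) with hF
    set S1 := ∑ j ∈ Finset.range m, (-1 : ℝ) ^ j * lam ^ (2 * j) / Real.Gamma (2 * j + 5 / 2) with hS1
    set S2 := ∑ j ∈ Finset.range m, (-1 : ℝ) ^ j * lam ^ (2 * j) / Real.Gamma (2 * j + 3 / 2) with hS2
    set G := Real.Gamma (2*(m:ℝ)+3/2) with hG
    set Q := Real.sqrt (2 / lam) with hQ
    have hGn : G ≠ 0 := hG0.ne'
    have h32n : (2*(m:ℝ)+3/2) ≠ 0 := by positivity
    have h52n : (2*(m:ℝ)+5/2) ≠ 0 := by positivity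
    field_simp
    ring_nf
    rw [show ((-1:ℝ)) ^ (m * 2) = 1 from Even.neg_one_pow ⟨m, by ring⟩]
    ring
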